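/- Let f : [0,1]^d → ℝ be concave with all supergradients of dual norm at most L, let f* be its Fenchel conjugate (over [0,1]^d), and for μ > 0 define f̂_μ(z) = min_{‖θ‖ ≤ L} ( f*(θ) + (μ/(2L))‖θ‖² − θ·z ), where ‖·‖ is the Euclidean norm. Then f̂_μ(z) − (μ/2)L ≤ f(z) ≤ f̂_μ(z) for all z ∈ [0,1]^d. -/

import Mathlib

/-- The cube `[0,1]^d` in Euclidean space. -/
def cube (d : ℕ) : Set (EuclideanSpace ℝ (Fin d)) := {y | ∀ i, y i ∈ Set.Icc (0 : ℝ) 1}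

private lemma aux_small (a K C : ℝ) (h : ∀ t : ℝ, 0 < t → t ≤ 1 → a ≤ K + t * C) : a ≤ K := by
  by_contra hcon
  push_neg at hcon
  have hAK : 0 < a - K := by linarith
  set t := min 1 ((a - K) / (2 * (|C| + 1))) with ht
  have h1 : 0 < (a - K) / (2 * (|C| + 1)) := by positivity
  have ht0 : 0 < t := lt_min one_pos h1
  have ht1 : t ≤ 1 := min_le_left _ _
  have h2 := h t ht0 ht1
  have h3 : t * C ≤ t * |C| := mul_le_mul_of_nonneg_left (le_abs_self C) ht0.le
  have h4 : t ≤ (a - K) / (2 * (|C| + 1)) := min_le_right _ _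
  have h5 : t * |C| ≤ ((a - K) / (2 * (|C| + 1))) * |C| :=
    mul_le_mul_of_nonneg_right h4 (abs_nonneg C)
  have h6 : ((a - K) / (2 * (|C| + 1))) * |C| < a - K := by
    rw [div_mul_eq_mul_div, div_lt_iff₀ (by positivity)]
    nlinarith [abs_nonneg C]
  linarith

private lemma coord_abs_le_norm {d : ℕ} (x : EuclideanSpace ℝ (Fin d)) (i : Fin d) :
    |x i| ≤ ‖x‖ := by
  rw [EuclideanSpace.norm_eq]
  have h1 : |x i| = Real.sqrt (‖x i‖ ^ 2) := by
    rw [Real.sqrt_sq_eq_abs, Real.norm_eq_abs, abs_abs]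
  rw [h1]
  apply Real.sqrt_le_sqrt
  exact Finset.single_le_sum (f := fun j => ‖x j‖ ^ 2) (fun j _ => by positivity)
    (Finset.mem_univ i)

private lemma ioo_mem_cube {d : ℕ} (x : EuclideanSpace ℝ (Fin d))
    (hx : ∀ i, 0 < x i ∧ x i < 1) : x ∈ cube d :=
  fun i => ⟨(hx i).1.le, (hx i).2.le⟩

set_option maxHeartbeats 1000000 in
/-- Existence of an approximate supergradient of norm at most `L` at a point with
uniform margin `δ` from the boundary of the cube. -/
private lemma supergrad {d : ℕ} {L : ℝ} (hL : 0 < L) {f : EuclideanSpace ℝ (Fin d) → ℝ}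
    (hf : ConcaveOn ℝ (cube d) f)
    (hlip : ∀ x ∈ cube d, ∀ y ∈ cube d, |f x - f y| ≤ L * ‖x - y‖)
    {δ : ℝ} (hδ : 0 < δ) {w : EuclideanSpace ℝ (Fin d)}
    (hw : ∀ i, δ ≤ w i ∧ w i ≤ 1 - δ) :
    ∃ θ : EuclideanSpace ℝ (Fin d), ‖θ‖ ≤ L ∧
      ∀ y ∈ cube d, f y ≤ f w + (inner ℝ θ (y - w) : ℝ) := by
  classical
  have hwIoo : ∀ i, 0 < w i ∧ w i < 1 :=
    fun i => ⟨lt_of_lt_of_le hδ (hw i).1, lt_of_le_of_lt (hw i).2 (by linarith)⟩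
  have hwcube : w ∈ cube d := ioo_mem_cube w hwIoo
  set S : Set (EuclideanSpace ℝ (Fin d) × ℝ) := {p | (∀ i, 0 < p.1 i ∧ p.1 i < 1) ∧ p.2 < f p.1} with hS
  -- openness
  have hU : IsOpen {v : EuclideanSpace ℝ (Fin d) | ∀ i, 0 < v i ∧ v i < 1} := by
    have : {v : EuclideanSpace ℝ (Fin d) | ∀ i, 0 < v i ∧ v i < 1} =
        ⋂ i, (fun v : EuclideanSpace ℝ (Fin d) => v i) ⁻¹' (Set.Ioo (0 : ℝ) 1) := by
      ext v; simp [Set.mem_Ioo, Set.mem_iInter]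
    rw [this]
    exact isOpen_iInter_of_finite fun i => isOpen_Ioo.preimage (PiLp.continuous_apply 2 _ i)
  have hopen : IsOpen S := by
    rw [Metric.isOpen_iff]
    rintro ⟨x, s⟩ ⟨hx, hs⟩
    obtain ⟨r₀, hr₀pos, hr₀⟩ :=
      Metric.isOpen_iff.mp (hU.preimage (continuous_fst)) (x, s)
        (show ((x, s) : EuclideanSpace ℝ (Fin d) × ℝ) ∈
          Prod.fst ⁻¹' {v : EuclideanSpace ℝ (Fin d) | ∀ i, 0 < v i ∧ v i < 1} from hx)
    have hxs : (0:ℝ) < f x - s := by simp at hs ⊢; linarith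
    refine ⟨min r₀ ((f x - s) / (L + 2)), lt_min hr₀pos (by positivity), ?_⟩
    rintro ⟨y, t⟩ hyt
    rw [Metric.mem_ball] at hyt
    have hyA : ∀ i, 0 < y i ∧ y i < 1 := by
      have : ((y, t) : EuclideanSpace ℝ (Fin d) × ℝ) ∈ Metric.ball ((x, s) : EuclideanSpace ℝ (Fin d) × ℝ) r₀ :=
        Metric.mem_ball.mpr (lt_of_lt_of_le hyt (min_le_left _ _))
      exact hr₀ this
    have hycube : y ∈ cube d := ioo_mem_cube y hyA
    have hxcube : x ∈ cube d := ioo_mem_cube x hx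
    have hyt' := hyt
    rw [Prod.dist_eq] at hyt'
    have hd1 : dist y x < min r₀ ((f x - s) / (L + 2)) :=
      lt_of_le_of_lt (le_max_left _ _) hyt'
    have hd2 : dist t s < min r₀ ((f x - s) / (L + 2)) :=
      lt_of_le_of_lt (le_max_right _ _) hyt'
    have hr2 : min r₀ ((f x - s) / (L + 2)) ≤ (f x - s) / (L + 2) := min_le_right _ _
    have hflip : f x - f y ≤ L * ‖x - y‖ := le_trans (le_abs_self _) (hlip x hxcube y hycube)
    have hn : ‖x - y‖ = dist y x := by rw [dist_eq_norm, norm_sub_rev]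
    have hts : t - s ≤ dist t s := by
      rw [Real.dist_eq]; exact le_abs_self _
    refine ⟨hyA, ?_⟩
    show t < f y
    have h7 : (f x - s) / (L + 2) * (L + 2) = f x - s := by field_simp
    nlinarith [dist_nonneg (x := y) (y := x), dist_nonneg (x := t) (y := s),
      mul_le_mul_of_nonneg_left hd1.le hL.le, hL.le]
  -- convexity
  have hconv : Convex ℝ S := by
    rintro ⟨x, s⟩ ⟨hx, hs⟩ ⟨y, t⟩ ⟨hy, ht⟩ a b ha hb hab
    have hxcube : x ∈ cube d := ioo_mem_cube x hx
    have hycube : y ∈ cube d := ioo_mem_cube y hy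
    have hcomb := hf.2 hxcube hycube ha hb hab
    constructor
    · intro i
      have h1 : (a • ((x, s) : EuclideanSpace ℝ (Fin d) × ℝ) + b • ((y, t) : EuclideanSpace ℝ (Fin d) × ℝ)).1 i = a * x i + b * y i := by
        simp [Prod.smul_fst, Prod.fst_add, PiLp.add_apply, PiLp.smul_apply, smul_eq_mul]
      rw [h1]
      have h2 : a * x i + b * y i ∈ Set.Ioo (0:ℝ) 1 := by
        have := convex_Ioo (0:ℝ) 1 ⟨(hx i).1, (hx i).2⟩ ⟨(hy i).1, (hy i).2⟩ ha hb hab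
        simpa [smul_eq_mul] using this
      exact ⟨h2.1, h2.2⟩
    · show (a • ((x, s) : EuclideanSpace ℝ (Fin d) × ℝ) + b • ((y, t) : EuclideanSpace ℝ (Fin d) × ℝ)).2 <
        f (a • ((x, s) : EuclideanSpace ℝ (Fin d) × ℝ) + b • ((y, t) : EuclideanSpace ℝ (Fin d) × ℝ)).1
      have h1 : (a • ((x, s) : EuclideanSpace ℝ (Fin d) × ℝ) + b • ((y, t) : EuclideanSpace ℝ (Fin d) × ℝ)).2 = a * s + b * t := by
        simp [smul_eq_mul]
      have h2 : (a • ((x, s) : EuclideanSpace ℝ (Fin d) × ℝ) + b • ((y, t) : EuclideanSpace ℝ (Fin d) × ℝ)).1 = a • x + b • y := by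
        simp
      rw [h1, h2]
      have hstrict : a * s + b * t < a * f x + b * f y := by
        rcases eq_or_lt_of_le ha with h | h
        · have hb1 : b = 1 := by linarith
          rw [← h, hb1]; simpa using ht
        · have h3 : a * s < a * f x := mul_lt_mul_of_pos_left hs h
          have h4 : b * t ≤ b * f y := mul_le_mul_of_nonneg_left ht.le hb
          linarith
      have h5 : a * f x + b * f y ≤ f (a • x + b • y) := by
        simpa [smul_eq_mul] using hcomb
      linarith
  -- separation
  have hnot : ((w, f w) : EuclideanSpace ℝ (Fin d) × ℝ) ∉ S := fun h => lt_irrefl _ h.2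
  obtain ⟨g, hg⟩ := geometric_hahn_banach_open_point hconv hopen hnot
  set c : ℝ := g ((0 : EuclideanSpace ℝ (Fin d)), (1 : ℝ)) with hc
  set φ : EuclideanSpace ℝ (Fin d) →L[ℝ] ℝ := g.comp (ContinuousLinearMap.inl ℝ (EuclideanSpace ℝ (Fin d)) ℝ) with hφ
  have hφa : ∀ v : EuclideanSpace ℝ (Fin d), φ v = g (v, 0) := fun v => by
    simp [hφ, ContinuousLinearMap.inl_apply]
  have hsplit : ∀ (v : EuclideanSpace ℝ (Fin d)) (t : ℝ), g (v, t) = φ v + t * c := by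
    intro v t
    have h1 : ((v, t) : EuclideanSpace ℝ (Fin d) × ℝ) = (v, (0:ℝ)) + t • (((0:EuclideanSpace ℝ (Fin d)), (1:ℝ)) : EuclideanSpace ℝ (Fin d) × ℝ) := by
      simp [Prod.ext_iff]
    rw [h1, map_add, map_smul, hφa, smul_eq_mul]
  have hmemS : ∀ (v : EuclideanSpace ℝ (Fin d)), (∀ i, 0 < v i ∧ v i < 1) → ∀ t < f v, ((v, t) : EuclideanSpace ℝ (Fin d) × ℝ) ∈ S :=
    fun v hv t htv => ⟨hv, htv⟩
  have hgw : g ((w, f w - 1) : EuclideanSpace ℝ (Fin d) × ℝ) < g ((w, f w) : EuclideanSpace ℝ (Fin d) × ℝ) :=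
    hg _ (hmemS w hwIoo _ (by linarith))
  rw [hsplit, hsplit] at hgw
  have hcpos : 0 < c := by nlinarith
  -- key inequality on the open cube
  have hkey : ∀ v : EuclideanSpace ℝ (Fin d), (∀ i, 0 < v i ∧ v i < 1) → φ v + c * f v ≤ φ w + c * f w := by
    intro v hv
    refine aux_small _ _ c fun t ht0 ht1 => ?_
    have h1 := hg _ (hmemS v hv (f v - t) (by linarith))
    rw [hsplit, hsplit] at h1
    nlinarith
  -- extend to the closed cube
  have hkey2 : ∀ y ∈ cube d, φ y + c * f y ≤ φ w + c * f w := by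
    intro y hy
    refine aux_small _ _ (φ y - φ w + c * L * ‖w - y‖) fun t ht0 ht1 => ?_
    set v : EuclideanSpace ℝ (Fin d) := (1 - t) • y + t • w with hv
    have hvIoo : ∀ i, 0 < v i ∧ v i < 1 := by
      intro i
      have h1 : v i = (1 - t) * y i + t * w i := by
        simp [hv, PiLp.add_apply, PiLp.smul_apply, smul_eq_mul]
      have h2 := hy i
      have h3 := hwIoo i
      rw [Set.mem_Icc] at h2
      constructor <;> rw [h1] <;> nlinarith
    have hvcube : v ∈ cube d := ioo_mem_cube v hvIoo
    have h2 := hkey v hvIoo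
    have hφv : φ v = (1 - t) * φ y + t * φ w := by
      rw [hv, map_add, map_smul, map_smul, smul_eq_mul, smul_eq_mul]
    have hyv : y - v = t • (y - w) := by
      rw [hv]; module
    have hnyv : ‖y - v‖ = t * ‖w - y‖ := by
      rw [hyv, norm_smul, Real.norm_eq_abs, abs_of_pos ht0, norm_sub_rev]
    have hfy : f y - f v ≤ L * ‖y - v‖ := le_trans (le_abs_self _) (hlip y hy v hvcube)
    rw [hnyv] at hfy
    have h8 : c * f y ≤ c * f v + c * (L * (t * ‖w - y‖)) := by
      have := mul_le_mul_of_nonneg_left (a := c) (by linarith : f y ≤ f v + L * (t * ‖w - y‖))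
        hcpos.le
      linarith [this]
    nlinarith
  -- construct θ
  set θ : EuclideanSpace ℝ (Fin d) := (-(1 / c)) • ((InnerProductSpace.toDual ℝ (EuclideanSpace ℝ (Fin d))).symm φ) with hθdef
  have hθi : ∀ v : EuclideanSpace ℝ (Fin d), (inner ℝ θ v : ℝ) = -(1 / c) * φ v := by
    intro v
    rw [hθdef, real_inner_smul_left, InnerProductSpace.toDual_symm_apply]
  have hsuper : ∀ y ∈ cube d, f y ≤ f w + (inner ℝ θ (y - w) : ℝ) := by
    intro y hy
    have h1 := hkey2 y hy
    rw [hθi, map_sub]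
    have h2 : f y - f w ≤ (φ w - φ y) / c := by
      rw [le_div_iff₀ hcpos]; linarith
    have h3 : -(1 / c) * (φ y - φ w) = (φ w - φ y) / c := by
      field_simp
      ring
    linarith
  refine ⟨θ, ?_, hsuper⟩
  by_cases hθ0 : θ = 0
  · rw [hθ0, norm_zero]; exact hL.le
  · have hn : 0 < ‖θ‖ := norm_pos_iff.mpr hθ0
    set u : EuclideanSpace ℝ (Fin d) := ‖θ‖⁻¹ • θ with hu
    have hun : ‖u‖ = 1 := by
      rw [hu, norm_smul, Real.norm_eq_abs, abs_of_pos (inv_pos.mpr hn), inv_mul_cancel₀ hn.ne']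
    set y : EuclideanSpace ℝ (Fin d) := w - δ • u with hy
    have hycube : y ∈ cube d := by
      intro i
      have hui : |u i| ≤ 1 := by rw [← hun]; exact coord_abs_le_norm u i
      rw [abs_le] at hui
      have h1 : y i = w i - δ * u i := by
        simp [hy, PiLp.sub_apply, PiLp.smul_apply, smul_eq_mul]
      have h2 := hw i
      rw [Set.mem_Icc, h1]
      constructor <;> nlinarith
    have h1 := hsuper y hycube
    have h2 : (inner ℝ θ (y - w) : ℝ) = -δ * ‖θ‖ := by
      have h3 : y - w = (-δ) • u := by rw [hy]; module
      rw [h3, real_inner_smul_right, hu, real_inner_smul_right,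
        real_inner_self_eq_norm_sq]
      field_simp
    have h3 : f w - f y ≤ L * ‖w - y‖ := le_trans (le_abs_self _) (hlip w hwcube y hycube)
    have h4 : ‖w - y‖ = δ := by
      have : w - y = δ • u := by rw [hy]; module
      rw [this, norm_smul, Real.norm_eq_abs, abs_of_pos hδ, hun, mul_one]
    rw [h4] at h3
    rw [h2] at h1
    nlinarith

set_option maxHeartbeats 1000000 in
/-- Nesterov smoothing sandwich: `f̂_μ(z) − (μ/2)L ≤ f(z) ≤ f̂_μ(z)` for the smooth
approximation `f̂_μ(z) = min_{‖θ‖ ≤ L}(f*(θ) + (μ/(2L))‖θ‖² − θ·z)`. -/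
theorem stmt_6 (d : ℕ) (L μ : ℝ) (hL : 0 < L) (hμ : 0 < μ)
    (f fstar fhat : EuclideanSpace ℝ (Fin d) → ℝ)
    (hf : ConcaveOn ℝ (cube d) f)
    (hlip : ∀ x ∈ cube d, ∀ y ∈ cube d, |f x - f y| ≤ L * ‖x - y‖)
    (hfstar : ∀ θ, IsGreatest ((fun y => (inner ℝ y θ : ℝ) + f y) '' cube d) (fstar θ))
    (hfhat : ∀ z, IsLeast
        ((fun θ => fstar θ + μ / (2 * L) * ‖θ‖ ^ 2 - (inner ℝ θ z : ℝ)) '' {θ | ‖θ‖ ≤ L})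
        (fhat z)) :
    ∀ z ∈ cube d, fhat z - μ / 2 * L ≤ f z ∧ f z ≤ fhat z := by
  intro z hz
  constructor
  · -- lower bound
    rw [sub_le_iff_le_add, add_comm]
    refine le_of_forall_pos_le_add fun ε hε => ?_
    set c₀ : EuclideanSpace ℝ (Fin d) := (WithLp.equiv 2 (Fin d → ℝ)).symm (fun _ => 1 / 2) with hc₀
    have hc₀a : ∀ i, c₀ i = 1 / 2 := fun i => rfl
    set N := ‖c₀ - z‖ with hN
    have hN0 : 0 ≤ N := norm_nonneg _
    set t := min 1 (ε / (2 * L * (N + 1))) with htdef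
    have ht0 : 0 < t := lt_min one_pos (by positivity)
    have ht1 : t ≤ 1 := min_le_left _ _
    set w : EuclideanSpace ℝ (Fin d) := (1 - t) • z + t • c₀ with hwdef
    have hwa : ∀ i, w i = (1 - t) * z i + t * (1 / 2) := by
      intro i
      simp [hwdef, PiLp.add_apply, PiLp.smul_apply, smul_eq_mul, hc₀a]
    have hw : ∀ i, t / 2 ≤ w i ∧ w i ≤ 1 - t / 2 := by
      intro i
      have h1 := hz i
      rw [Set.mem_Icc] at h1
      rw [hwa i]
      constructor <;> nlinarith
    obtain ⟨g, hgL, hgs⟩ := supergrad hL hf hlip (by positivity : (0:ℝ) < t / 2) hw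
    set θ : EuclideanSpace ℝ (Fin d) := -g with hθdef
    have hθL : ‖θ‖ ≤ L := by rw [hθdef, norm_neg]; exact hgL
    have hwz : w - z = t • (c₀ - z) := by rw [hwdef]; module
    have hnwz : ‖w - z‖ = t * N := by
      rw [hwz, norm_smul, Real.norm_eq_abs, abs_of_pos ht0, hN]
    have hwcube : w ∈ cube d := by
      intro i
      have := hw i
      rw [Set.mem_Icc]
      constructor <;> [linarith; linarith]
    have htN : 2 * L * (t * N) ≤ ε := by
      have h1 : t ≤ ε / (2 * L * (N + 1)) := min_le_right _ _
      have h2 : t * (2 * L * (N + 1)) ≤ ε := by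
        rw [← le_div_iff₀ (by positivity)]; exact h1
      nlinarith
    -- fstar θ ≤ inner z θ + f z + ε
    obtain ⟨y₀, hy₀, hfst⟩ := (hfstar θ).1
    have hub : fstar θ ≤ (inner ℝ z θ : ℝ) + f z + ε := by
      have h1 := hgs y₀ hy₀
      have h2 : (inner ℝ g (y₀ - w) : ℝ) = (inner ℝ g y₀ : ℝ) - (inner ℝ g w : ℝ) :=
        inner_sub_right _ _ _
      have h3 : (inner ℝ g (z - w) : ℝ) ≤ ‖g‖ * ‖z - w‖ := real_inner_le_norm _ _
      have h3' : (inner ℝ g (z - w) : ℝ) = (inner ℝ g z : ℝ) - (inner ℝ g w : ℝ) :=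
        inner_sub_right _ _ _
      have h4 : ‖z - w‖ = t * N := by rw [norm_sub_rev, hnwz]
      have h5 : f w - f z ≤ L * ‖w - z‖ := le_trans (le_abs_self _) (hlip w hwcube z hz)
      rw [hnwz] at h5
      rw [h4] at h3
      have h6 : ‖g‖ * (t * N) ≤ L * (t * N) :=
        mul_le_mul_of_nonneg_right hgL (by positivity)
      have h7 : (inner ℝ y₀ θ : ℝ) = -(inner ℝ g y₀ : ℝ) := by
        rw [hθdef, inner_neg_right, real_inner_comm]
      have h8 : (inner ℝ z θ : ℝ) = -(inner ℝ g z : ℝ) := by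
        rw [hθdef, inner_neg_right, real_inner_comm]
      have hfst' : (inner ℝ y₀ θ : ℝ) + f y₀ = fstar θ := hfst
      rw [← hfst']
      linarith
    have hmem : fstar θ + μ / (2 * L) * ‖θ‖ ^ 2 - (inner ℝ θ z : ℝ) ∈
        ((fun θ => fstar θ + μ / (2 * L) * ‖θ‖ ^ 2 - (inner ℝ θ z : ℝ)) '' {θ | ‖θ‖ ≤ L}) :=
      ⟨θ, hθL, rfl⟩
    have hle := (hfhat z).2 hmem
    have hpen : μ / (2 * L) * ‖θ‖ ^ 2 ≤ μ / 2 * L := by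
      have h1 : ‖θ‖ ^ 2 ≤ L ^ 2 := by nlinarith [norm_nonneg θ]
      have h2 : (0:ℝ) ≤ μ / (2 * L) := by positivity
      have h3 : μ / (2 * L) * ‖θ‖ ^ 2 ≤ μ / (2 * L) * L ^ 2 :=
        mul_le_mul_of_nonneg_left h1 h2
      have h4 : μ / (2 * L) * L ^ 2 = μ / 2 * L := by field_simp
      linarith
    have h8 : (inner ℝ z θ : ℝ) = (inner ℝ θ z : ℝ) := real_inner_comm _ _
    linarith
  · -- upper bound
    obtain ⟨θ, hθL, heq⟩ := (hfhat z).1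
    have h1 : (inner ℝ z θ : ℝ) + f z ≤ fstar θ := (hfstar θ).2 ⟨z, hz, rfl⟩
    have hpen : (0:ℝ) ≤ μ / (2 * L) * ‖θ‖ ^ 2 := by positivity
    have h8 : (inner ℝ z θ : ℝ) = (inner ℝ θ z : ℝ) := real_inner_comm _ _
    have heq' : fstar θ + μ / (2 * L) * ‖θ‖ ^ 2 - (inner ℝ θ z : ℝ) = fhat z := heq
    rw [← heq']
    linarith
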